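/- Let λ > 0, α_L > 0, α_N > 0 be reals and let P_L : ℝ → ℝ be continuous with 0 ≤ P_L(r) ≤ 1 for all r ≥ 0; set P_N(r) = 1 − P_L(r). Define f_L(z) = 2π·z·λ·P_L(z)·exp(−2πλ∫₀^z P_L(r)·r dr) and f_N(z) = 2π·z·λ·P_N(z)·exp(−2πλ∫₀^z P_N(r)·r dr). Then ∫₀^∞ [ f_L(z)·exp(−2πλ∫₀^{z^{α_L/α_N}} P_N(r)·r dr) + f_N(z)·exp(−2πλ∫₀^{z^{α_N/α_L}} P_L(r)·r dr) ] dz = 1. -/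

import Mathlib

open Real MeasureTheory intervalIntegral

section Lemma1Helpers
open Set Filter

lemma prim_hasDerivAt {u : ℝ → ℝ} (hu : Continuous u) (z : ℝ) :
    HasDerivAt (fun z => ∫ r in (0:ℝ)..z, u r * r) (u z * z) z := by
  have hc : Continuous fun r => u r * r := hu.mul continuous_id
  exact intervalIntegral.integral_hasDerivAt_right (hc.intervalIntegrable _ _)
    (hc.stronglyMeasurableAtFilter _ _) hc.continuousAt

lemma prim_mono {u : ℝ → ℝ} (hu : Continuous u) (hu0 : ∀ r, 0 ≤ r → 0 ≤ u r) {s t : ℝ}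
    (hs : 0 ≤ s) (hst : s ≤ t) :
    (∫ r in (0:ℝ)..s, u r * r) ≤ ∫ r in (0:ℝ)..t, u r * r := by
  have hc : Continuous fun r => u r * r := hu.mul continuous_id
  have h1 : ((∫ r in (0:ℝ)..s, u r * r) + ∫ r in s..t, u r * r) = ∫ r in (0:ℝ)..t, u r * r :=
    intervalIntegral.integral_add_adjacent_intervals (hc.intervalIntegrable _ _)
      (hc.intervalIntegrable _ _)
  have h2 : 0 ≤ ∫ r in s..t, u r * r := by
    apply intervalIntegral.integral_nonneg hst
    intro x hx
    exact mul_nonneg (hu0 x (hs.trans hx.1)) (hs.trans hx.1)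
  linarith

lemma prim_add {u v : ℝ → ℝ} (hu : Continuous u) (hv : Continuous v)
    (hsum : ∀ r, 0 ≤ r → u r + v r = 1) {m : ℝ} (hm : 0 ≤ m) :
    ((∫ r in (0:ℝ)..m, u r * r) + ∫ r in (0:ℝ)..m, v r * r) = m ^ 2 / 2 := by
  have hcu : Continuous fun r => u r * r := hu.mul continuous_id
  have hcv : Continuous fun r => v r * r := hv.mul continuous_id
  rw [← intervalIntegral.integral_add (hcu.intervalIntegrable _ _) (hcv.intervalIntegrable _ _)]
  have h : Set.EqOn (fun r => u r * r + v r * r) (fun r : ℝ => r) (Set.uIcc (0:ℝ) m) := by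
    intro r hr
    rw [Set.uIcc_of_le hm] at hr
    have := hsum r hr.1
    simp only
    nlinarith [hr.1]
  rw [intervalIntegral.integral_congr h, integral_id]
  ring

lemma aux_integral (c p : ℝ) (hc : 0 < c) (hp : 0 < p)
    (u v : ℝ → ℝ) (hu : Continuous u) (hv : Continuous v)
    (hu0 : ∀ r, 0 ≤ r → 0 ≤ u r) (hv0 : ∀ r, 0 ≤ r → 0 ≤ v r)
    (hsum : ∀ r, 0 ≤ r → u r + v r = 1) :
    IntegrableOn (fun x : ℝ => c * (u x * x + v (x ^ p) * (x ^ p) * (p * x ^ (p - 1))) *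
        Real.exp (-(c * ((∫ r in (0:ℝ)..x, u r * r) + ∫ r in (0:ℝ)..(x ^ p), v r * r))))
      (Set.Ioi 0) ∧
    (∫ x in Set.Ioi (0:ℝ), c * (u x * x + v (x ^ p) * (x ^ p) * (p * x ^ (p - 1))) *
        Real.exp (-(c * ((∫ r in (0:ℝ)..x, u r * r) + ∫ r in (0:ℝ)..(x ^ p), v r * r)))) = 1 := by
  have hrp : Continuous fun z : ℝ => z ^ p :=
    continuous_iff_continuousAt.2 fun z => Real.continuousAt_rpow_const z p (Or.inr hp.le)
  have hUcont : Continuous fun z : ℝ => ∫ r in (0:ℝ)..z, u r * r :=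
    continuous_iff_continuousAt.2 fun z => (prim_hasDerivAt hu z).continuousAt
  have hVcont : Continuous fun z : ℝ => ∫ r in (0:ℝ)..z, v r * r :=
    continuous_iff_continuousAt.2 fun z => (prim_hasDerivAt hv z).continuousAt
  have hgcont : Continuous fun z : ℝ =>
      -Real.exp (-(c * ((∫ r in (0:ℝ)..z, u r * r) + ∫ r in (0:ℝ)..(z ^ p), v r * r))) :=
    (Real.continuous_exp.comp (continuous_const.mul (hUcont.add (hVcont.comp hrp))).neg).neg
  have hderiv : ∀ x ∈ Set.Ioi (0:ℝ),
      HasDerivAt (fun z : ℝ =>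
        -Real.exp (-(c * ((∫ r in (0:ℝ)..z, u r * r) + ∫ r in (0:ℝ)..(z ^ p), v r * r))))
      (c * (u x * x + v (x ^ p) * (x ^ p) * (p * x ^ (p - 1))) *
        Real.exp (-(c * ((∫ r in (0:ℝ)..x, u r * r) + ∫ r in (0:ℝ)..(x ^ p), v r * r)))) x := by
    intro x hx
    have hx0 : (0:ℝ) < x := hx
    have h1 : HasDerivAt (fun z : ℝ => ∫ r in (0:ℝ)..z, u r * r) (u x * x) x :=
      prim_hasDerivAt hu x
    have h2 : HasDerivAt (fun z : ℝ => z ^ p) (p * x ^ (p - 1)) x :=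
      Real.hasDerivAt_rpow_const (Or.inl hx0.ne')
    have h3 : HasDerivAt (fun z : ℝ => ∫ r in (0:ℝ)..(z ^ p), v r * r)
        (v (x ^ p) * (x ^ p) * (p * x ^ (p - 1))) x :=
      by have := (prim_hasDerivAt hv (x ^ p)).comp x h2; exact this
    have h4 : HasDerivAt (fun z : ℝ =>
        -(c * ((∫ r in (0:ℝ)..z, u r * r) + ∫ r in (0:ℝ)..(z ^ p), v r * r)))
        (-(c * (u x * x + v (x ^ p) * (x ^ p) * (p * x ^ (p - 1))))) x :=
      ((h1.add h3).const_mul c).neg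
    have h5 : HasDerivAt (fun z : ℝ =>
        -Real.exp (-(c * ((∫ r in (0:ℝ)..z, u r * r) + ∫ r in (0:ℝ)..(z ^ p), v r * r)))) _ x :=
      h4.exp.neg
    convert h5 using 1
    ring
  have hpos : ∀ x ∈ Set.Ioi (0:ℝ),
      0 ≤ c * (u x * x + v (x ^ p) * (x ^ p) * (p * x ^ (p - 1))) *
        Real.exp (-(c * ((∫ r in (0:ℝ)..x, u r * r) + ∫ r in (0:ℝ)..(x ^ p), v r * r))) := by
    intro x hx
    have hx0 : (0:ℝ) < x := hx
    have hxp : (0:ℝ) ≤ x ^ p := Real.rpow_nonneg hx0.le p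
    have h1 : 0 ≤ u x * x := mul_nonneg (hu0 x hx0.le) hx0.le
    have h2 : 0 ≤ v (x ^ p) * (x ^ p) * (p * x ^ (p - 1)) :=
      mul_nonneg (mul_nonneg (hv0 _ hxp) hxp)
        (mul_nonneg hp.le (Real.rpow_nonneg hx0.le _))
    positivity
  -- tendsto 0 at infinity
  have htend : Tendsto (fun z : ℝ =>
      -Real.exp (-(c * ((∫ r in (0:ℝ)..z, u r * r) + ∫ r in (0:ℝ)..(z ^ p), v r * r))))
      atTop (nhds 0) := by
    have hq : 0 < min 1 p := lt_min one_pos hp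
    have hE : Tendsto (fun z : ℝ =>
        c * ((∫ r in (0:ℝ)..z, u r * r) + ∫ r in (0:ℝ)..(z ^ p), v r * r)) atTop atTop := by
      have hle : (fun z : ℝ => c * ((z ^ min 1 p) ^ 2 / 2)) ≤ᶠ[atTop]
          fun z : ℝ => c * ((∫ r in (0:ℝ)..z, u r * r) + ∫ r in (0:ℝ)..(z ^ p), v r * r) := by
        filter_upwards [Filter.eventually_ge_atTop (1:ℝ)] with z hz
        have hz0 : (0:ℝ) ≤ z := le_trans zero_le_one hz
        have hm0 : (0:ℝ) ≤ z ^ min 1 p := Real.rpow_nonneg hz0 _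
        have hm1 : z ^ min 1 p ≤ z := by
          calc z ^ min 1 p ≤ z ^ (1:ℝ) :=
                Real.rpow_le_rpow_of_exponent_le hz (min_le_left _ _)
            _ = z := Real.rpow_one z
        have hm2 : z ^ min 1 p ≤ z ^ p :=
          Real.rpow_le_rpow_of_exponent_le hz (min_le_right _ _)
        have e1 := prim_mono hu hu0 hm0 hm1
        have e2 := prim_mono hv hv0 hm0 hm2
        have e3 := prim_add hu hv hsum hm0
        have : (z ^ min 1 p) ^ 2 / 2 ≤
            (∫ r in (0:ℝ)..z, u r * r) + ∫ r in (0:ℝ)..(z ^ p), v r * r := by linarith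
        exact mul_le_mul_of_nonneg_left this hc.le
      refine tendsto_atTop_mono' atTop hle ?_
      have h1 : Tendsto (fun z : ℝ => z ^ min 1 p) atTop atTop :=
        tendsto_rpow_atTop hq
      have h2 : Tendsto (fun z : ℝ => (z ^ min 1 p) ^ 2 / 2) atTop atTop :=
        (tendsto_pow_atTop two_ne_zero).comp h1 |>.atTop_div_const two_pos
      exact h2.const_mul_atTop hc
    have : Tendsto (fun z : ℝ =>
        Real.exp (-(c * ((∫ r in (0:ℝ)..z, u r * r) + ∫ r in (0:ℝ)..(z ^ p), v r * r))))
        atTop (nhds 0) :=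
      Real.tendsto_exp_atBot.comp (tendsto_neg_atTop_atBot.comp hE)
    simpa using this.neg
  have hcw : ContinuousWithinAt (fun z : ℝ =>
      -Real.exp (-(c * ((∫ r in (0:ℝ)..z, u r * r) + ∫ r in (0:ℝ)..(z ^ p), v r * r))))
      (Set.Ici 0) 0 := hgcont.continuousWithinAt
  refine ⟨integrableOn_Ioi_deriv_of_nonneg hcw hderiv hpos htend, ?_⟩
  rw [integral_Ioi_of_hasDerivAt_of_nonneg hcw hderiv hpos htend]
  simp [Real.zero_rpow hp.ne']

end Lemma1Helpers

/-- **Lemma 1 defines a valid probability density.**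
With LOS probability `P_L ∈ [0,1]`, NLOS probability `P_N = 1 − P_L`, path-loss
exponents `α_L, α_N > 0`, and the densities
`f_L(z) = 2πzλP_L(z)exp(−2πλ∫₀^z P_L(r)r dr)` and
`f_N(z) = 2πzλP_N(z)exp(−2πλ∫₀^z P_N(r)r dr)`, the radial density
`f_L(z)·exp(−2πλ∫₀^{z^{α_L/α_N}} P_N(r)r dr) + f_N(z)·exp(−2πλ∫₀^{z^{α_N/α_L}} P_L(r)r dr)`
integrates to one over `(0,∞)`. -/
theorem lemma1_density_integrates_to_one
    (lam α_L α_N : ℝ) (hlam : 0 < lam) (hαL : 0 < α_L) (hαN : 0 < α_N)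
    (P_L : ℝ → ℝ) (hPcont : Continuous P_L)
    (hP0 : ∀ r : ℝ, 0 ≤ r → 0 ≤ P_L r) (hP1 : ∀ r : ℝ, 0 ≤ r → P_L r ≤ 1)
    (P_N : ℝ → ℝ) (hPN : ∀ r : ℝ, P_N r = 1 - P_L r)
    (f_L f_N : ℝ → ℝ)
    (hfL : ∀ z : ℝ, f_L z =
      2 * Real.pi * z * lam * P_L z *
        Real.exp (-(2 * Real.pi * lam * ∫ r in (0:ℝ)..z, P_L r * r)))
    (hfN : ∀ z : ℝ, f_N z =
      2 * Real.pi * z * lam * P_N z *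
        Real.exp (-(2 * Real.pi * lam * ∫ r in (0:ℝ)..z, P_N r * r))) :
    ∫ z in Set.Ioi (0:ℝ),
        (f_L z *
            Real.exp (-(2 * Real.pi * lam *
              ∫ r in (0:ℝ)..(z ^ (α_L / α_N)), P_N r * r)) +
          f_N z *
            Real.exp (-(2 * Real.pi * lam *
              ∫ r in (0:ℝ)..(z ^ (α_N / α_L)), P_L r * r))) = 1 := by
  have hPNcont : Continuous P_N := by
    have h : P_N = fun r => 1 - P_L r := funext hPN
    rw [h]; exact continuous_const.sub hPcont
  set c := 2 * Real.pi * lam with hcdef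
  have hc : 0 < c := by positivity
  set a := α_L / α_N with hadef
  set b := α_N / α_L with hbdef
  have ha : 0 < a := div_pos hαL hαN
  have hb : 0 < b := div_pos hαN hαL
  have hab : ∀ x : ℝ, 0 < x → (x ^ a) ^ b = x := by
    intro x hx
    rw [← Real.rpow_mul hx.le]
    have h1 : a * b = 1 := by
      rw [hadef, hbdef]; field_simp
    rw [h1, Real.rpow_one]
  have hPN0 : ∀ r, 0 ≤ r → 0 ≤ P_N r := fun r hr => by rw [hPN]; linarith [hP1 r hr]
  have hsum1 : ∀ r, 0 ≤ r → P_L r + P_N r = 1 := fun r hr => by rw [hPN]; ring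
  have hsum2 : ∀ r, 0 ≤ r → P_N r + P_L r = 1 := fun r hr => by rw [hPN]; ring
  obtain ⟨hintφ, hvalφ⟩ := aux_integral c a hc ha P_L P_N hPcont hPNcont hP0 hPN0 hsum1
  obtain ⟨hintψ, hvalψ⟩ := aux_integral c b hc hb P_N P_L hPNcont hPcont hPN0 hP0 hsum2
  -- named pieces
  set φ₁ : ℝ → ℝ := fun x => c * (P_L x * x) *
    Real.exp (-(c * ((∫ r in (0:ℝ)..x, P_L r * r) + ∫ r in (0:ℝ)..(x ^ a), P_N r * r)))
    with hφ₁def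
  set φ₂ : ℝ → ℝ := fun x => c * (P_N (x ^ a) * (x ^ a) * (a * x ^ (a - 1))) *
    Real.exp (-(c * ((∫ r in (0:ℝ)..x, P_L r * r) + ∫ r in (0:ℝ)..(x ^ a), P_N r * r)))
    with hφ₂def
  set ψ₁ : ℝ → ℝ := fun x => c * (P_N x * x) *
    Real.exp (-(c * ((∫ r in (0:ℝ)..x, P_N r * r) + ∫ r in (0:ℝ)..(x ^ b), P_L r * r)))
    with hψ₁def
  -- continuity infrastructure
  have hUc : Continuous fun z : ℝ => ∫ r in (0:ℝ)..z, P_L r * r :=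
    continuous_iff_continuousAt.2 fun z => (prim_hasDerivAt hPcont z).continuousAt
  have hVc : Continuous fun z : ℝ => ∫ r in (0:ℝ)..z, P_N r * r :=
    continuous_iff_continuousAt.2 fun z => (prim_hasDerivAt hPNcont z).continuousAt
  have hra : Continuous fun z : ℝ => z ^ a :=
    continuous_iff_continuousAt.2 fun z => Real.continuousAt_rpow_const z a (Or.inr ha.le)
  have hrb : Continuous fun z : ℝ => z ^ b :=
    continuous_iff_continuousAt.2 fun z => Real.continuousAt_rpow_const z b (Or.inr hb.le)
  have hφ₁cont : Continuous φ₁ :=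
    (continuous_const.mul (hPcont.mul continuous_id)).mul
      (Real.continuous_exp.comp (continuous_const.mul (hUc.add (hVc.comp hra))).neg)
  have hψ₁cont : Continuous ψ₁ :=
    (continuous_const.mul (hPNcont.mul continuous_id)).mul
      (Real.continuous_exp.comp (continuous_const.mul (hVc.add (hUc.comp hrb))).neg)
  -- integrability of the pieces
  have hφ₁int : IntegrableOn φ₁ (Set.Ioi (0:ℝ)) := by
    apply Integrable.mono' hintφ hφ₁cont.aestronglyMeasurable
    rw [ae_restrict_iff' measurableSet_Ioi]
    filter_upwards with x hx
    have hx0 : (0:ℝ) < x := hx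
    have hxp : (0:ℝ) ≤ x ^ a := Real.rpow_nonneg hx0.le a
    have h1 : 0 ≤ φ₁ x := by
      apply mul_nonneg (mul_nonneg hc.le (mul_nonneg (hP0 x hx0.le) hx0.le)) (Real.exp_pos _).le
    have h2 : 0 ≤ c * (P_N (x ^ a) * (x ^ a) * (a * x ^ (a - 1))) *
        Real.exp (-(c * ((∫ r in (0:ℝ)..x, P_L r * r) + ∫ r in (0:ℝ)..(x ^ a), P_N r * r))) :=
      mul_nonneg (mul_nonneg hc.le (mul_nonneg (mul_nonneg (hPN0 _ hxp) hxp)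
        (mul_nonneg ha.le (Real.rpow_nonneg hx0.le _)))) (Real.exp_pos _).le
    rw [Real.norm_eq_abs, abs_of_nonneg h1]
    have key : φ₁ x + c * (P_N (x ^ a) * (x ^ a) * (a * x ^ (a - 1))) *
        Real.exp (-(c * ((∫ r in (0:ℝ)..x, P_L r * r) + ∫ r in (0:ℝ)..(x ^ a), P_N r * r)))
        = c * (P_L x * x + P_N (x ^ a) * (x ^ a) * (a * x ^ (a - 1))) *
        Real.exp (-(c * ((∫ r in (0:ℝ)..x, P_L r * r) + ∫ r in (0:ℝ)..(x ^ a), P_N r * r))) := by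
      simp only [hφ₁def]
      ring
    linarith [h2, key]
  have hψ₁int : IntegrableOn ψ₁ (Set.Ioi (0:ℝ)) := by
    apply Integrable.mono' hintψ hψ₁cont.aestronglyMeasurable
    rw [ae_restrict_iff' measurableSet_Ioi]
    filter_upwards with x hx
    have hx0 : (0:ℝ) < x := hx
    have hxp : (0:ℝ) ≤ x ^ b := Real.rpow_nonneg hx0.le b
    have h1 : 0 ≤ ψ₁ x := by
      apply mul_nonneg (mul_nonneg hc.le (mul_nonneg (hPN0 x hx0.le) hx0.le)) (Real.exp_pos _).le
    have h2 : 0 ≤ c * (P_L (x ^ b) * (x ^ b) * (b * x ^ (b - 1))) *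
        Real.exp (-(c * ((∫ r in (0:ℝ)..x, P_N r * r) + ∫ r in (0:ℝ)..(x ^ b), P_L r * r))) :=
      mul_nonneg (mul_nonneg hc.le (mul_nonneg (mul_nonneg (hP0 _ hxp) hxp)
        (mul_nonneg hb.le (Real.rpow_nonneg hx0.le _)))) (Real.exp_pos _).le
    rw [Real.norm_eq_abs, abs_of_nonneg h1]
    have key : ψ₁ x + c * (P_L (x ^ b) * (x ^ b) * (b * x ^ (b - 1))) *
        Real.exp (-(c * ((∫ r in (0:ℝ)..x, P_N r * r) + ∫ r in (0:ℝ)..(x ^ b), P_L r * r)))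
        = c * (P_N x * x + P_L (x ^ b) * (x ^ b) * (b * x ^ (b - 1))) *
        Real.exp (-(c * ((∫ r in (0:ℝ)..x, P_N r * r) + ∫ r in (0:ℝ)..(x ^ b), P_L r * r))) := by
      simp only [hψ₁def]
      ring
    linarith [h2, key]
  have hφ₂int : IntegrableOn φ₂ (Set.Ioi (0:ℝ)) := by
    have h : φ₂ = fun x => (c * (P_L x * x + P_N (x ^ a) * (x ^ a) * (a * x ^ (a - 1))) *
        Real.exp (-(c * ((∫ r in (0:ℝ)..x, P_L r * r) + ∫ r in (0:ℝ)..(x ^ a), P_N r * r))))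
        - φ₁ x := by
      funext x; rw [hφ₂def, hφ₁def]; ring
    rw [h]
    exact hintφ.sub hφ₁int
  -- change of variables : ∫ ψ₁ = ∫ φ₂
  have hcov : (∫ x in Set.Ioi (0:ℝ), ψ₁ x) = ∫ x in Set.Ioi (0:ℝ), φ₂ x := by
    rw [← integral_comp_rpow_Ioi ψ₁ ha.ne']
    apply setIntegral_congr_fun measurableSet_Ioi
    intro x hx
    have hx0 : (0:ℝ) < x := hx
    simp only [hψ₁def, hφ₂def, smul_eq_mul, abs_of_pos ha, hab x hx0]
    rw [add_comm (∫ r in (0:ℝ)..(x ^ a), P_N r * r) (∫ r in (0:ℝ)..x, P_L r * r)]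
    ring
  -- pointwise identity for the original integrand
  have hpt : ∀ z : ℝ,
      (f_L z * Real.exp (-(c * ∫ r in (0:ℝ)..(z ^ a), P_N r * r)) +
        f_N z * Real.exp (-(c * ∫ r in (0:ℝ)..(z ^ b), P_L r * r))) = φ₁ z + ψ₁ z := by
    intro z
    rw [hfL z, hfN z, hφ₁def, hψ₁def, hcdef]
    simp only
    rw [show (-((2 * Real.pi * lam) * ((∫ r in (0:ℝ)..z, P_L r * r)
          + ∫ r in (0:ℝ)..(z ^ a), P_N r * r)))
        = (-(2 * Real.pi * lam * ∫ r in (0:ℝ)..z, P_L r * r)) +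
          (-(2 * Real.pi * lam * ∫ r in (0:ℝ)..(z ^ a), P_N r * r)) by ring,
      show (-((2 * Real.pi * lam) * ((∫ r in (0:ℝ)..z, P_N r * r)
          + ∫ r in (0:ℝ)..(z ^ b), P_L r * r)))
        = (-(2 * Real.pi * lam * ∫ r in (0:ℝ)..z, P_N r * r)) +
          (-(2 * Real.pi * lam * ∫ r in (0:ℝ)..(z ^ b), P_L r * r)) by ring,
      Real.exp_add, Real.exp_add]
    ring
  calc
    (∫ z in Set.Ioi (0:ℝ),
        (f_L z * Real.exp (-(c * ∫ r in (0:ℝ)..(z ^ a), P_N r * r)) +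
          f_N z * Real.exp (-(c * ∫ r in (0:ℝ)..(z ^ b), P_L r * r))))
      = ∫ z in Set.Ioi (0:ℝ), (φ₁ z + ψ₁ z) := by
        apply setIntegral_congr_fun measurableSet_Ioi
        intro z _
        exact hpt z
    _ = (∫ z in Set.Ioi (0:ℝ), φ₁ z) + ∫ z in Set.Ioi (0:ℝ), ψ₁ z :=
        integral_add hφ₁int hψ₁int
    _ = (∫ z in Set.Ioi (0:ℝ), φ₁ z) + ∫ z in Set.Ioi (0:ℝ), φ₂ z := by rw [hcov]
    _ = ∫ z in Set.Ioi (0:ℝ), (φ₁ z + φ₂ z) := (integral_add hφ₁int hφ₂int).symm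
    _ = ∫ x in Set.Ioi (0:ℝ), c * (P_L x * x + P_N (x ^ a) * (x ^ a) * (a * x ^ (a - 1))) *
          Real.exp (-(c * ((∫ r in (0:ℝ)..x, P_L r * r) + ∫ r in (0:ℝ)..(x ^ a), P_N r * r))) := by
        apply setIntegral_congr_fun measurableSet_Ioi
        intro x _
        rw [hφ₁def, hφ₂def]
        ring
    _ = 1 := hvalφ
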